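/- For all positive integers n, m, r: A_{r+1}(n, m, 1) = A_r(n, m, n), i.e., the number of permutations of [n] with m (r+1)-descents ending in 1 equals the number of permutations of [n] with m r-descents ending in n. -/

import Mathlib

/-- Number of `r`-descents of a permutation `σ` of `[n]` (positions `i < n` with
`σ(i) ≥ σ(i+1) + r`), encoded on `Fin n`. -/
def rDesc (n r : ℕ) (σ : Equiv.Perm (Fin n)) : ℕ :=
  (Finset.univ.filter fun i : Fin n =>
    (if h : (i : ℕ) + 1 < n then ((σ ⟨(i : ℕ) + 1, h⟩ : Fin n) : ℕ) else n) + r ≤ (σ i : ℕ)).card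

/-- Number of `r`-excedances of a permutation `σ` of `[n]` (positions `i ≤ n` with
`σ(i) ≥ i + r`), encoded on `Fin n`. -/
def rExc (n r : ℕ) (σ : Equiv.Perm (Fin n)) : ℕ :=
  (Finset.univ.filter fun i : Fin n => (i : ℕ) + r ≤ (σ i : ℕ)).card

/-- The last value `σ(n)` of a permutation of `[n]` (as an element of `{1,…,n}`). -/
def lastVal (n : ℕ) (σ : Equiv.Perm (Fin n)) : ℕ :=
  if h : 0 < n then ((σ ⟨n - 1, Nat.sub_lt h Nat.one_pos⟩ : Fin n) : ℕ) + 1 else 0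

/-- `Ar r n m k` = number of permutations of `[n]` with exactly `m` `r`-descents
whose last value is `k`. -/
def Ar (r n m k : ℕ) : ℕ :=
  (Finset.univ.filter fun σ : Equiv.Perm (Fin n) => rDesc n r σ = m ∧ lastVal n σ = k).card

open List in
/-- descent count with gap `ρ` -/
def dsL (ρ : ℕ) : List ℕ → ℕ
  | a :: b :: t => dsL ρ (b :: t) + (if b + ρ ≤ a then 1 else 0)
  | _ => 0

lemma dsL_cons (ρ a : ℕ) (t : List ℕ) :
    dsL ρ (a :: t) = dsL ρ t + (if 0 < t.length ∧ t.getD 0 0 + ρ ≤ a then 1 else 0) := by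
  cases t with
  | nil => simp [dsL]
  | cons b t' => simp [dsL, List.getD]

lemma dsL_eq_sum (ρ : ℕ) (l : List ℕ) :
    dsL ρ l = ∑ j ∈ Finset.range l.length,
      (if j + 1 < l.length ∧ l.getD (j+1) 0 + ρ ≤ l.getD j 0 then 1 else 0) := by
  induction l with
  | nil => simp [dsL]
  | cons a t ih =>
    rw [List.length_cons, Finset.sum_range_succ']
    have h1 : ∀ j, (if j + 1 + 1 < t.length + 1 ∧ (a :: t).getD (j+1+1) 0 + ρ ≤ (a :: t).getD (j+1) 0 then 1 else 0)
        = (if j + 1 < t.length ∧ t.getD (j+1) 0 + ρ ≤ t.getD j 0 then (1:ℕ) else 0) := by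
      intro j; simp [List.getD_cons_succ]
    simp only [h1]
    rw [dsL_cons, ← ih]
    congr 1
    simp only [List.getD_cons_succ, List.getD_cons_zero]
    have h2 : (0 + 1 < t.length + 1 ∧ t.getD 0 0 + ρ ≤ a) ↔ (0 < t.length ∧ t.getD 0 0 + ρ ≤ a) := by omega
    rw [if_congr h2 rfl rfl]

/-- insert value `M` at position `j` -/
def insL : ℕ → ℕ → List ℕ → List ℕ
  | 0, M, l => M :: l
  | _+1, M, [] => [M]
  | j+1, M, a :: t => a :: insL j M t

/-- (index of first `M`, list with first `M` removed) -/
def remM (M : ℕ) : List ℕ → ℕ × List ℕ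
  | [] => (0, [])
  | a :: t => if a = M then (0, t) else ((remM M t).1 + 1, a :: (remM M t).2)

lemma insL_length (M : ℕ) : ∀ (j : ℕ) (l : List ℕ), (insL j M l).length = l.length + 1 := by
  intro j
  induction j with
  | zero => intro l; simp [insL]
  | succ j ih => intro l; cases l with
    | nil => simp [insL]
    | cons a t => simp [insL, ih]

lemma insL_perm (M : ℕ) : ∀ (j : ℕ) (l : List ℕ), j ≤ l.length → (insL j M l).Perm (M :: l) := by
  intro j
  induction j with
  | zero => intro l _; simp [insL]
  | succ j ih => intro l hj; cases l with
    | nil => simp at hj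
    | cons a t =>
      simp only [insL]
      refine List.Perm.trans (List.Perm.cons a (ih t (by simpa using hj))) ?_
      exact List.Perm.swap M a t

lemma remM_insL (M : ℕ) : ∀ (j : ℕ) (l : List ℕ), j ≤ l.length → M ∉ l →
    remM M (insL j M l) = (j, l) := by
  intro j
  induction j with
  | zero => intro l _ _; simp [insL, remM]
  | succ j ih => intro l hj hM; cases l with
    | nil => simp at hj
    | cons a t =>
      have ha : a ≠ M := by intro h; exact hM (h ▸ List.mem_cons_self)
      simp only [insL, remM, ha, if_false]
      have := ih t (by simpa using hj) (fun h => hM (List.mem_cons_of_mem a h))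
      rw [this]

lemma insL_remM (M : ℕ) : ∀ (l : List ℕ), M ∈ l →
    insL (remM M l).1 M (remM M l).2 = l := by
  intro l
  induction l with
  | nil => intro h; simp at h
  | cons a t ih =>
    intro h
    by_cases ha : a = M
    · subst ha; simp [remM, insL]
    · have ht : M ∈ t := by rcases List.mem_cons.mp h with h' | h'; exact absurd h'.symm ha; exact h'
      simp only [remM, ha, if_false, insL]
      rw [ih ht]

lemma remM_fst_le (M : ℕ) : ∀ (l : List ℕ), M ∈ l → (remM M l).1 ≤ (remM M l).2.length := by
  intro l
  induction l with
  | nil => intro h; simp at h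
  | cons a t ih =>
    intro h
    by_cases ha : a = M
    · subst ha; simp [remM]
    · have ht : M ∈ t := by rcases List.mem_cons.mp h with h' | h'; exact absurd h'.symm ha; exact h'
      simp only [remM, ha, if_false]
      simpa using ih ht

lemma remM_perm (M : ℕ) : ∀ (l : List ℕ), M ∈ l → (M :: (remM M l).2).Perm l := by
  intro l
  induction l with
  | nil => intro h; simp at h
  | cons a t ih =>
    intro h
    by_cases ha : a = M
    · subst ha; simp [remM]
    · have ht : M ∈ t := by rcases List.mem_cons.mp h with h' | h'; exact absurd h'.symm ha; exact h'
      simp only [remM, ha, if_false]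
      refine List.Perm.trans (List.Perm.swap a M (remM M t).2) ?_
      exact List.Perm.cons a (ih ht)

lemma insL_append (M : ℕ) : ∀ (j : ℕ) (l t : List ℕ), j ≤ l.length →
    insL j M (l ++ t) = insL j M l ++ t := by
  intro j
  induction j with
  | zero => intro l t _; simp [insL]
  | succ j ih => intro l t hj; cases l with
    | nil => simp at hj
    | cons a l' =>
      show a :: insL j M (l' ++ t) = a :: (insL j M l' ++ t)
      rw [ih l' t (by simpa using hj)]

lemma insL_getD_zero (M : ℕ) : ∀ (i : ℕ) (t : List ℕ), i + 1 ≤ t.length →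
    (insL (i+1) M t).getD 0 0 = t.getD 0 0 := by
  intro i t h
  cases t with
  | nil => simp at h
  | cons b t' => simp [insL]

lemma dsL_insL (ρ M : ℕ) : ∀ (w : List ℕ) (j : ℕ), j ≤ w.length → (∀ b ∈ w, b < M) →
    dsL ρ (insL j M w)
      + (if 1 ≤ j ∧ j < w.length ∧ w.getD j 0 + ρ ≤ w.getD (j-1) 0 then 1 else 0)
    = dsL ρ w + (if j < w.length ∧ w.getD j 0 + ρ ≤ M then 1 else 0) := by
  intro w
  induction w with
  | nil =>
    intro j hj _
    have : j = 0 := by simpa using hj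
    subst this
    simp [insL, dsL]
  | cons a t ih =>
    intro j hj hM
    have haM : a < M := hM a (List.mem_cons_self)
    cases j with
    | zero =>
      show dsL ρ (M :: a :: t) + _ = _
      have h1 : dsL ρ (M :: a :: t) = dsL ρ (a :: t) + (if a + ρ ≤ M then 1 else 0) := by
        simp [dsL]
      rw [h1]
      simp
    | succ j =>
      have hjt : j ≤ t.length := by simpa using hj
      have hMt : ∀ b ∈ t, b < M := fun b hb => hM b (List.mem_cons_of_mem a hb)
      have IH := ih j hjt hMt
      show dsL ρ (a :: insL j M t) + _ = _
      rw [dsL_cons ρ a (insL j M t), dsL_cons ρ a t]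
      cases j with
      | zero =>
        simp only [insL] at IH ⊢
        have hMa : ¬ (M + ρ ≤ a) := by omega
        simp only [List.getD_cons_zero, List.getD_cons_succ, List.length_cons] at IH ⊢
        simp only [hMa] at *
        simp at IH ⊢
        omega
      | succ i =>
        have hlen : (insL (i+1) M t).length = t.length + 1 := insL_length M (i+1) t
        have hhd : (insL (i+1) M t).getD 0 0 = t.getD 0 0 := insL_getD_zero M i t (by omega)
        simp only [List.getD_cons_zero, List.getD_cons_succ, List.length_cons, hlen, hhd,
          Nat.add_sub_cancel] at IH ⊢
        have e2 : (i + 1 + 1 < t.length + 1) = (i + 1 < t.length) := by simp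
        have e3 : ∀ (P : Prop), (1 ≤ i + 1 ∧ P) = P := fun P => by simp [Nat.succ_le_succ_iff]
        have e4 : ∀ (P : Prop), (1 ≤ i + 1 + 1 ∧ P) = P := fun P => by simp [Nat.succ_le_succ_iff]
        simp only [e3] at IH
        simp only [e4, e2]
        have e5 : (0 < t.length + 1 ∧ t.getD 0 0 + ρ ≤ a) = (t.getD 0 0 + ρ ≤ a) := by
          have h5 : 0 < t.length + 1 := Nat.succ_pos _
          simp [h5]
        have e6 : (0 < t.length ∧ t.getD 0 0 + ρ ≤ a) = (t.getD 0 0 + ρ ≤ a) := by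
          have h6 : 0 < t.length := by omega
          simp [h6]
        simp only [e5, e6]
        omega

lemma sum_range_ext {h : ℕ → ℕ} {A B : ℕ} (hA : ∀ j, A ≤ j → h j = 0)
    (hB : ∀ j, B ≤ j → h j = 0) :
    ∑ j ∈ Finset.range A, h j = ∑ j ∈ Finset.range B, h j := by
  rcases le_total A B with hab | hab
  · exact Finset.sum_subset (Finset.range_subset_range.2 hab)
      (fun x _ hx => hA x (by simpa using hx))
  · exact (Finset.sum_subset (Finset.range_subset_range.2 hab)
      (fun x _ hx => hB x (by simpa using hx))).symm

lemma dsL_count (ρ : ℕ) (w : List ℕ) (K : ℕ) (hK : w.length ≤ K + 1) :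
    ((Finset.range (K+1)).filter fun j =>
        1 ≤ j ∧ j < w.length ∧ w.getD j 0 + ρ ≤ w.getD (j-1) 0).card = dsL ρ w := by
  rw [Finset.card_filter, Finset.sum_range_succ']
  have h0 : (if 1 ≤ 0 ∧ 0 < w.length ∧ w.getD 0 0 + ρ ≤ w.getD (0-1) 0 then (1:ℕ) else 0) = 0 := by
    simp
  rw [h0, add_zero]
  have h1 : ∀ j, (if 1 ≤ j + 1 ∧ j + 1 < w.length ∧ w.getD (j+1) 0 + ρ ≤ w.getD (j+1-1) 0 then (1:ℕ) else 0)
      = (if j + 1 < w.length ∧ w.getD (j+1) 0 + ρ ≤ w.getD j 0 then 1 else 0) := by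
    intro j
    have e : (1 ≤ j + 1 ∧ j + 1 < w.length ∧ w.getD (j+1) 0 + ρ ≤ w.getD (j+1-1) 0)
        = (j + 1 < w.length ∧ w.getD (j+1) 0 + ρ ≤ w.getD j 0) := by
      simp [Nat.succ_le_succ_iff]
    simp only [e]
  simp only [h1]
  rw [dsL_eq_sum]
  exact sum_range_ext
    (fun j hji => by have h : ¬ (j + 1 < w.length ∧ w.getD (j+1) 0 + ρ ≤ w.getD j 0) := by omega
                     exact if_neg h)
    (fun j hji => by have h : ¬ (j + 1 < w.length ∧ w.getD (j+1) 0 + ρ ≤ w.getD j 0) := by omega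
                     exact if_neg h)

lemma getD_lt_of_mem {w : List ℕ} {M : ℕ} (hM : ∀ b ∈ w, b < M) {i : ℕ} (hi : i < w.length) :
    w.getD i 0 < M := by
  have : w.getD i 0 ∈ w := by
    rw [List.getD_eq_getElem?_getD, List.getElem?_eq_getElem hi]
    exact List.getElem_mem hi
  exact hM _ this

lemma insert_eq_iff (ρ M : ℕ) (w : List ℕ) (j : ℕ) (hj : j ≤ w.length) (hM : ∀ b ∈ w, b < M) :
    (dsL ρ (insL j M w) = dsL ρ w ↔
      ((1 ≤ j ∧ j < w.length ∧ w.getD j 0 + ρ ≤ w.getD (j-1) 0) ∨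
        ¬(j < w.length ∧ w.getD j 0 + ρ ≤ M)))
    ∧ (dsL ρ (insL j M w) = dsL ρ w ∨ dsL ρ (insL j M w) = dsL ρ w + 1) := by
  have INS := dsL_insL ρ M w j hj hM
  by_cases c2 : 1 ≤ j ∧ j < w.length ∧ w.getD j 0 + ρ ≤ w.getD (j-1) 0
  · have hb : w.getD (j-1) 0 < M := getD_lt_of_mem hM (by omega)
    have c1 : j < w.length ∧ w.getD j 0 + ρ ≤ M := ⟨c2.2.1, by omega⟩
    rw [if_pos c2, if_pos c1] at INS
    constructor
    · constructor
      · intro _; exact Or.inl c2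
      · intro _; omega
    · left; omega
  · rw [if_neg c2] at INS
    by_cases c1 : j < w.length ∧ w.getD j 0 + ρ ≤ M
    · rw [if_pos c1] at INS
      constructor
      · constructor
        · intro h; omega
        · rintro (h | h)
          · exact absurd h c2
          · exact absurd c1 h
      · right; omega
    · rw [if_neg c1] at INS
      constructor
      · constructor
        · intro _; exact Or.inr c1
        · intro _; omega
      · left; omega

lemma slot_count (ρ M : ℕ) (w : List ℕ) (K : ℕ) (hK1 : K ≤ w.length) (hK2 : w.length ≤ K + 1)
    (hM : ∀ b ∈ w, b < M) :
    ((Finset.range (K+1)).filter fun j => dsL ρ (insL j M w) = dsL ρ w).card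
      = dsL ρ w + ((Finset.range (K+1)).filter fun j => ¬(j < w.length ∧ w.getD j 0 + ρ ≤ M)).card := by
  have hcongr : (Finset.range (K+1)).filter (fun j => dsL ρ (insL j M w) = dsL ρ w)
      = (Finset.range (K+1)).filter (fun j =>
          (1 ≤ j ∧ j < w.length ∧ w.getD j 0 + ρ ≤ w.getD (j-1) 0) ∨
          ¬(j < w.length ∧ w.getD j 0 + ρ ≤ M)) := by
    apply Finset.filter_congr
    intro j hjr
    have hj : j ≤ w.length := by
      have := Finset.mem_range.mp hjr; omega
    exact (insert_eq_iff ρ M w j hj hM).1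
  rw [hcongr, Finset.filter_or, Finset.card_union_of_disjoint, dsL_count ρ w K hK2]
  rw [Finset.disjoint_filter]
  intro j _ h2 h1
  have hb : w.getD (j-1) 0 < M := getD_lt_of_mem hM (by omega)
  exact h1 ⟨h2.2.1, by omega⟩

lemma dsL_zero (ρ : ℕ) : ∀ (l : List ℕ), (∀ b ∈ l, b < ρ) → dsL ρ l = 0 := by
  intro l
  induction l with
  | nil => intro _; rfl
  | cons a t ih =>
    intro h
    rw [dsL_cons, ih (fun b hb => h b (List.mem_cons_of_mem a hb))]
    have : ¬ (0 < t.length ∧ t.getD 0 0 + ρ ≤ a) := by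
      rintro ⟨h1, h2⟩
      exact absurd (h a (List.mem_cons_self)) (by omega)
    rw [if_neg this]

lemma dsL_concat (ρ v : ℕ) : ∀ (u : List ℕ), (∀ b ∈ u, b < v + ρ) → dsL ρ (u ++ [v]) = dsL ρ u := by
  intro u
  induction u with
  | nil => intro _; rfl
  | cons a t ih =>
    intro h
    rw [List.cons_append, dsL_cons, dsL_cons, ih (fun b hb => h b (List.mem_cons_of_mem a hb))]
    congr 1
    cases t with
    | nil =>
      have : ¬ (v + ρ ≤ a) := by
        have := h a (List.mem_cons_self); omega
      simp [this]
    | cons b t' => simp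

/-- the fixed tail -/
def tlL (c : ℕ) : List ℕ := if c = 0 then [] else [0]

def baseL (c N : ℕ) : List ℕ := (List.range N).map (· + c)

def gsetL (c N : ℕ) : Finset (List ℕ) := (baseL c N).permutations.toFinset

lemma length_baseL (c N : ℕ) : (baseL c N).length = N := by simp [baseL]

lemma nodup_baseL (c N : ℕ) : (baseL c N).Nodup :=
  (List.nodup_range (n := N)).map (fun _ _ h => by omega)

lemma mem_baseL {c N b : ℕ} : b ∈ baseL c N ↔ c ≤ b ∧ b < N + c := by
  simp only [baseL, List.mem_map, List.mem_range]
  constructor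
  · rintro ⟨v, hv, rfl⟩; omega
  · rintro ⟨h1, h2⟩; exact ⟨b - c, by omega, by omega⟩

lemma mem_gsetL {c N : ℕ} {u : List ℕ} : u ∈ gsetL c N ↔ u.Perm (baseL c N) := by
  simp [gsetL, List.mem_toFinset, List.mem_permutations]

lemma card_gsetL (c N : ℕ) : (gsetL c N).card = N.factorial := by
  rw [gsetL, List.toFinset_card_of_nodup (List.nodup_permutations _ (nodup_baseL c N))]
  rw [List.length_permutations, length_baseL]

lemma sum_getD (f : ℕ → ℕ) : ∀ (l : List ℕ),
    ∑ j ∈ Finset.range l.length, f (l.getD j 0) = (l.map f).sum := by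
  intro l
  induction l with
  | nil => simp
  | cons a t ih =>
    rw [List.length_cons, Finset.sum_range_succ']
    simp only [List.getD_cons_succ, List.getD_cons_zero, ih, List.map_cons, List.sum_cons]
    omega

lemma count_pos_eq (P : ℕ → Prop) [DecidablePred P] {u base : List ℕ} (hperm : u.Perm base) :
    ((Finset.range u.length).filter fun j => P (u.getD j 0)).card
      = ((Finset.range base.length).filter fun j => P (base.getD j 0)).card := by
  rw [Finset.card_filter, Finset.card_filter]
  have h1 := sum_getD (fun b => if P b then 1 else 0) u
  have h2 := sum_getD (fun b => if P b then 1 else 0) base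
  rw [h1, h2]
  exact (hperm.map _).sum_eq

lemma getD_baseL {c N j : ℕ} (h : j < N) : (baseL c N).getD j 0 = j + c := by
  rw [List.getD_eq_getElem?_getD]
  simp [baseL, List.getElem?_map, List.getElem?_range h]

lemma length_of_perm_base {c N : ℕ} {u : List ℕ} (h : u.Perm (baseL c N)) : u.length = N := by
  rw [h.length_eq, length_baseL]

lemma filter_le_range_card (A N : ℕ) (hA : A ≤ N) :
    ((Finset.range N).filter fun j => A ≤ j).card = N - A := by
  have he : (Finset.range N).filter (fun j => A ≤ j) = Finset.Ico A N := by
    ext j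
    simp only [Finset.mem_filter, Finset.mem_range, Finset.mem_Ico]
    omega
  rw [he, Nat.card_Ico]

lemma Bcount {r c N : ℕ} (hc : c ≤ 1) (hr : 1 ≤ r) (hrN : r ≤ N) {u : List ℕ}
    (hu : u.Perm (baseL c N)) :
    ((Finset.range (N+1)).filter fun j =>
        ¬(j < (u ++ tlL c).length ∧ (u ++ tlL c).getD j 0 + (r + c) ≤ N + c)).card = r := by
  have hlen : u.length = N := length_of_perm_base hu
  interval_cases c
  · -- c = 0
    have htl : tlL 0 = [] := rfl
    rw [htl, List.append_nil]
    rw [Finset.range_add_one, Finset.filter_insert]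
    have hNpred : ¬(N < u.length ∧ u.getD N 0 + (r + 0) ≤ N + 0) := by
      rw [hlen]; omega
    rw [if_pos hNpred]
    rw [Finset.card_insert_of_notMem (by simp)]
    have hcongr : (Finset.range N).filter
          (fun j => ¬(j < u.length ∧ u.getD j 0 + (r + 0) ≤ N + 0))
        = (Finset.range N).filter (fun j => ¬(u.getD j 0 + r ≤ N)) := by
      apply Finset.filter_congr
      intro j hj
      have hjl : j < u.length := by rw [hlen]; exact Finset.mem_range.mp hj
      have h1' : (j < u.length) = True := eq_true hjl
      have h2' : (u.getD j 0 + (r + 0) ≤ N + 0) = (u.getD j 0 + r ≤ N) := by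
        rw [Nat.add_zero, Nat.add_zero]
      rw [h1', h2', true_and]
    rw [hcongr]
    have := count_pos_eq (fun b => ¬(b + r ≤ N)) hu
    rw [hlen, length_baseL] at this
    rw [this]
    have hcongr2 : (Finset.range N).filter (fun j => ¬((baseL 0 N).getD j 0 + r ≤ N))
        = (Finset.range N).filter (fun j => N - r + 1 ≤ j) := by
      apply Finset.filter_congr
      intro j hj
      have hjN : j < N := Finset.mem_range.mp hj
      rw [getD_baseL hjN]
      constructor
      · intro h; omega
      · intro h; omega
    rw [hcongr2, filter_le_range_card _ _ (by omega)]
    omega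
  · -- c = 1
    have htl : tlL 1 = [0] := rfl
    rw [htl]
    have hlen2 : (u ++ [0]).length = N + 1 := by simp [hlen]
    rw [Finset.range_add_one, Finset.filter_insert]
    have hNpred : ¬ ¬(N < (u ++ [0]).length ∧ (u ++ [0]).getD N 0 + (r + 1) ≤ N + 1) := by
      rw [not_not]
      constructor
      · omega
      · have : (u ++ [0]).getD N 0 = 0 := by
          rw [← hlen, List.getD_append_right u [0] 0 u.length (le_refl _)]
          simp
        rw [this]; omega
    rw [if_neg hNpred]
    have hcongr : (Finset.range N).filter
          (fun j => ¬(j < (u ++ [0]).length ∧ (u ++ [0]).getD j 0 + (r + 1) ≤ N + 1))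
        = (Finset.range N).filter (fun j => ¬(u.getD j 0 + (r + 1) ≤ N + 1)) := by
      apply Finset.filter_congr
      intro j hj
      have hjN : j < N := Finset.mem_range.mp hj
      have h1 : j < (u ++ [0]).length := by omega
      have h2 : (u ++ [0]).getD j 0 = u.getD j 0 :=
        List.getD_append u [0] 0 j (by omega)
      have h1' : (j < (u ++ [0]).length) = True := eq_true h1
      rw [h2, h1', true_and]
    rw [hcongr]
    have := count_pos_eq (fun b => ¬(b + (r + 1) ≤ N + 1)) hu
    rw [hlen, length_baseL] at this
    rw [this]
    have hcongr2 : (Finset.range N).filter (fun j => ¬((baseL 1 N).getD j 0 + (r+1) ≤ N+1))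
        = (Finset.range N).filter (fun j => N - r ≤ j) := by
      apply Finset.filter_congr
      intro j hj
      have hjN : j < N := Finset.mem_range.mp hj
      rw [getD_baseL hjN]
      constructor
      · intro h; omega
      · intro h; omega
    rw [hcongr2, filter_le_range_card _ _ (by omega)]
    omega

def HcL (r c N m : ℕ) : ℕ := ((gsetL c N).filter fun u => dsL (r + c) (u ++ tlL c) = m).card

lemma fiber_eq {r c N m : ℕ} (hc : c ≤ 1) (hr : 1 ≤ r) (hrN : r ≤ N) {u : List ℕ}
    (hu : u.Perm (baseL c N)) :
    ((Finset.range (N+1)).filter fun j => dsL (r+c) (insL j (N+c) u ++ tlL c) = m).card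
    = if dsL (r+c) (u ++ tlL c) = m then m + r
      else if m ≠ 0 ∧ dsL (r+c) (u ++ tlL c) = m - 1 then N + 1 - (m - 1) - r else 0 := by
  have hlen : u.length = N := length_of_perm_base hu
  have htll : (tlL c).length = c := by interval_cases c <;> rfl
  have hwlen : (u ++ tlL c).length = N + c := by simp [hlen, htll]
  have hM : ∀ b ∈ u ++ tlL c, b < N + c := by
    intro b hb
    rcases List.mem_append.mp hb with h | h
    · exact (mem_baseL.mp (hu.subset h)).2
    · have hb0 : b = 0 := by
        interval_cases c
        · simp [tlL] at h
        · simpa [tlL] using h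
      omega
  have hfc : (Finset.range (N+1)).filter (fun j => dsL (r+c) (insL j (N+c) u ++ tlL c) = m)
      = (Finset.range (N+1)).filter (fun j => dsL (r+c) (insL j (N+c) (u ++ tlL c)) = m) := by
    apply Finset.filter_congr
    intro j hj
    rw [insL_append (N+c) j u (tlL c) (by rw [hlen]; exact Nat.lt_succ_iff.mp (Finset.mem_range.mp hj))]
  rw [hfc]
  have hslot := slot_count (r+c) (N+c) (u ++ tlL c) N (by omega) (by omega) hM
  have hB := Bcount hc hr hrN hu
  rw [hB] at hslot
  have htv : ∀ j ∈ Finset.range (N+1),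
      dsL (r+c) (insL j (N+c) (u ++ tlL c)) = dsL (r+c) (u ++ tlL c) ∨
      dsL (r+c) (insL j (N+c) (u ++ tlL c)) = dsL (r+c) (u ++ tlL c) + 1 := by
    intro j hj
    exact (insert_eq_iff (r+c) (N+c) (u ++ tlL c) j
      (by rw [hwlen]; have := Finset.mem_range.mp hj; omega) hM).2
  by_cases h1 : dsL (r+c) (u ++ tlL c) = m
  · rw [if_pos h1]
    have : (Finset.range (N+1)).filter (fun j => dsL (r+c) (insL j (N+c) (u ++ tlL c)) = m)
        = (Finset.range (N+1)).filter (fun j =>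
            dsL (r+c) (insL j (N+c) (u ++ tlL c)) = dsL (r+c) (u ++ tlL c)) := by
      apply Finset.filter_congr; intro j _; rw [h1]
    rw [this, hslot, h1]
  · by_cases h2 : m ≠ 0 ∧ dsL (r+c) (u ++ tlL c) = m - 1
    · rw [if_neg h1, if_pos h2]
      have hiff : (Finset.range (N+1)).filter (fun j => dsL (r+c) (insL j (N+c) (u ++ tlL c)) = m)
          = (Finset.range (N+1)).filter (fun j =>
              ¬(dsL (r+c) (insL j (N+c) (u ++ tlL c)) = dsL (r+c) (u ++ tlL c))) := by
        apply Finset.filter_congr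
        intro j hj
        rcases htv j hj with he | he <;> rw [he] <;>
          · constructor
            · intro hh; omega
            · intro hh; omega
      rw [hiff, Finset.filter_not, Finset.card_sdiff_of_subset (Finset.filter_subset _ _), Finset.card_range,
        hslot]
      omega
    · rw [if_neg h1, if_neg h2]
      rw [Finset.card_eq_zero, Finset.filter_eq_empty_iff]
      intro j hj
      rcases htv j hj with he | he <;> rw [he] <;> omega

lemma baseL_succ (c N : ℕ) : baseL c (N+1) = baseL c N ++ [N + c] := by
  simp [baseL, List.range_succ]

lemma card_insert_bij (c N : ℕ) (P : List ℕ → Prop) [DecidablePred P] :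
    ((gsetL c (N+1)).filter P).card
      = ∑ u ∈ gsetL c N, ((Finset.range (N+1)).filter fun j => P (insL j (N+c) u)).card := by
  have hstep : ∑ u ∈ gsetL c N, ((Finset.range (N+1)).filter fun j => P (insL j (N+c) u)).card
      = ((gsetL c N ×ˢ Finset.range (N+1)).filter fun p => P (insL p.2 (N+c) p.1)).card := by
    rw [Finset.card_filter, Finset.sum_product]
    apply Finset.sum_congr rfl
    intro u _
    rw [Finset.card_filter]
  rw [hstep]
  apply Finset.card_bij (fun p _ => insL p.2 (N+c) p.1) ?_ ?_ ?_ |>.symm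
  · -- maps into
    rintro ⟨u, j⟩ hp
    rw [Finset.mem_filter] at hp ⊢
    obtain ⟨hmem, hP⟩ := hp
    rw [Finset.mem_product] at hmem
    have hu : u.Perm (baseL c N) := mem_gsetL.mp hmem.1
    have hj : j ≤ u.length := by
      rw [length_of_perm_base hu]
      exact Nat.lt_succ_iff.mp (Finset.mem_range.mp hmem.2)
    constructor
    · rw [mem_gsetL, baseL_succ]
      exact ((insL_perm (N+c) j u hj).trans ((hu.cons (N+c)).trans
        (List.perm_append_singleton (N+c) (baseL c N)).symm))
    · exact hP
  · -- injective
    rintro ⟨u, j⟩ hp ⟨u', j'⟩ hp' heq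
    rw [Finset.mem_filter, Finset.mem_product] at hp hp'
    have hu : u.Perm (baseL c N) := mem_gsetL.mp hp.1.1
    have hu' : u'.Perm (baseL c N) := mem_gsetL.mp hp'.1.1
    have hj : j ≤ u.length := by
      rw [length_of_perm_base hu]; exact Nat.lt_succ_iff.mp (Finset.mem_range.mp hp.1.2)
    have hj' : j' ≤ u'.length := by
      rw [length_of_perm_base hu']; exact Nat.lt_succ_iff.mp (Finset.mem_range.mp hp'.1.2)
    have hMu : (N+c) ∉ u := fun hmm => by
      have := (mem_baseL.mp (hu.subset hmm)).2; omega
    have hMu' : (N+c) ∉ u' := fun hmm => by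
      have := (mem_baseL.mp (hu'.subset hmm)).2; omega
    have e1 := remM_insL (N+c) j u hj hMu
    have e2 := remM_insL (N+c) j' u' hj' hMu'
    simp only at heq
    have h3 : (j, u) = (j', u') := by rw [← e1, ← e2, heq]
    injection h3 with h4 h5
    simp [h4, h5]
  · -- surjective
    intro w hw
    rw [Finset.mem_filter] at hw
    obtain ⟨hmem, hP⟩ := hw
    have hwp : w.Perm (baseL c (N+1)) := mem_gsetL.mp hmem
    have hMw : (N+c) ∈ w := hwp.mem_iff.mpr (by rw [mem_baseL]; omega)
    refine ⟨((remM (N+c) w).2, (remM (N+c) w).1), ?_, ?_⟩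
    · rw [Finset.mem_filter, Finset.mem_product]
      have hperm : ((N+c) :: (remM (N+c) w).2).Perm w := remM_perm (N+c) w hMw
      have hu2 : (remM (N+c) w).2.Perm (baseL c N) := by
        have : ((N+c) :: (remM (N+c) w).2).Perm ((N+c) :: baseL c N) :=
          hperm.trans (hwp.trans (by rw [baseL_succ]; exact List.perm_append_singleton _ _))
        exact this.cons_inv
      refine ⟨⟨mem_gsetL.mpr hu2, ?_⟩, ?_⟩
      · rw [Finset.mem_range, Nat.lt_succ_iff]
        have := remM_fst_le (N+c) w hMw
        rw [length_of_perm_base hu2] at this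
        exact this
      · rw [insL_remM (N+c) w hMw]
        exact hP
    · exact insL_remM (N+c) w hMw

lemma HcL_rec {r c N m : ℕ} (hc : c ≤ 1) (hr : 1 ≤ r) (hrN : r ≤ N) :
    HcL r c (N+1) m = (m + r) * HcL r c N m
      + (if m = 0 then 0 else (N + 1 - (m - 1) - r) * HcL r c N (m-1)) := by
  rw [HcL, card_insert_bij c N (fun w => dsL (r+c) (w ++ tlL c) = m)]
  have hfib : ∀ u ∈ gsetL c N,
      ((Finset.range (N+1)).filter fun j => dsL (r+c) (insL j (N+c) u ++ tlL c) = m).card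
      = (if dsL (r+c) (u ++ tlL c) = m then m + r else 0)
        + (if m ≠ 0 ∧ dsL (r+c) (u ++ tlL c) = m - 1 then N + 1 - (m - 1) - r else 0) := by
    intro u hu
    rw [fiber_eq hc hr hrN (mem_gsetL.mp hu)]
    by_cases h1 : dsL (r+c) (u ++ tlL c) = m
    · rw [if_pos h1, if_pos h1]
      have : ¬ (m ≠ 0 ∧ dsL (r+c) (u ++ tlL c) = m - 1) := by
        rintro ⟨hm0, hm1⟩; omega
      rw [if_neg this, add_zero]
    · rw [if_neg h1, if_neg h1, zero_add]
  rw [Finset.sum_congr rfl hfib, Finset.sum_add_distrib]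
  congr 1
  · rw [← Finset.sum_filter, Finset.sum_const, smul_eq_mul, HcL, mul_comm]
  · by_cases hm0 : m = 0
    · subst hm0
      simp
    · rw [if_neg hm0]
      have : ∀ u : List ℕ, (m ≠ 0 ∧ dsL (r+c) (u ++ tlL c) = m - 1)
          = (dsL (r+c) (u ++ tlL c) = m - 1) := by
        intro u
        simp [hm0]
      simp only [this]
      rw [← Finset.sum_filter, Finset.sum_const, smul_eq_mul, HcL, mul_comm]

lemma HcL_base {r c N m : ℕ} (hc : c ≤ 1) (hr : 1 ≤ r) (hN : N ≤ r) :
    HcL r c N m = if m = 0 then N.factorial else 0 := by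
  have hz : ∀ u ∈ gsetL c N, dsL (r+c) (u ++ tlL c) = 0 := by
    intro u hu
    apply dsL_zero
    intro b hb
    rcases List.mem_append.mp hb with h | h
    · have := (mem_baseL.mp ((mem_gsetL.mp hu).subset h)).2; omega
    · have hb0 : b = 0 := by
        interval_cases c
        · simp [tlL] at h
        · simpa [tlL] using h
      omega
  rw [HcL]
  by_cases hm0 : m = 0
  · subst hm0
    rw [if_pos rfl, ← card_gsetL c N]
    congr 1
    rw [Finset.filter_true_of_mem hz]
  · rw [if_neg hm0, Finset.card_eq_zero, Finset.filter_eq_empty_iff]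
    intro u hu
    rw [hz u hu]
    omega

lemma HcL_eq (r : ℕ) (hr : 1 ≤ r) : ∀ N m, HcL r 1 N m = HcL r 0 N m := by
  intro N
  induction N using Nat.strong_induction_on with
  | _ N ih =>
    intro m
    by_cases hN : N ≤ r
    · rw [HcL_base (by omega) hr hN, HcL_base (by omega) hr hN]
    · obtain ⟨N', rfl⟩ : ∃ N', N = N' + 1 := ⟨N - 1, by omega⟩
      have hrN' : r ≤ N' := by omega
      rw [HcL_rec (by omega) hr hrN', HcL_rec (by omega) hr hrN',
        ih N' (by omega) m]
      by_cases hm0 : m = 0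
      · simp [hm0]
      · rw [if_neg hm0, if_neg hm0, ih N' (by omega) (m-1)]

def wdL (n : ℕ) (σ : Equiv.Perm (Fin n)) : List ℕ := List.ofFn fun i => (σ i : ℕ)

lemma wdL_length (n : ℕ) (σ : Equiv.Perm (Fin n)) : (wdL n σ).length = n := by simp [wdL]

lemma wdL_getD (n : ℕ) (σ : Equiv.Perm (Fin n)) (i : ℕ) (h : i < n) :
    (wdL n σ).getD i 0 = (σ ⟨i, h⟩ : ℕ) := by
  rw [wdL, List.getD_eq_getElem?_getD]
  simp [List.getElem?_ofFn, h]

lemma getD_eq_get' {l : List ℕ} {i : ℕ} (h : i < l.length) : l.getD i 0 = l.get ⟨i, h⟩ := by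
  rw [List.getD_eq_getElem?_getD, List.getElem?_eq_getElem h]
  rfl

lemma wdL_perm (n : ℕ) (σ : Equiv.Perm (Fin n)) : (wdL n σ).Perm (List.range n) := by
  apply List.perm_of_nodup_nodup_toFinset_eq
  · rw [wdL, List.nodup_ofFn]
    intro i j hij
    exact σ.injective (Fin.val_injective hij)
  · exact List.nodup_range (n := n)
  · ext x
    simp only [wdL, List.mem_toFinset, List.mem_ofFn, List.mem_range, Set.mem_range]
    constructor
    · rintro ⟨i, rfl⟩; exact (σ i).isLt
    · intro hx; exact ⟨σ.symm ⟨x, hx⟩, by simp⟩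

lemma rDesc_eq (n r : ℕ) (σ : Equiv.Perm (Fin n)) : rDesc n r σ = dsL r (wdL n σ) := by
  rw [rDesc, Finset.card_filter, dsL_eq_sum, wdL_length]
  rw [← Fin.sum_univ_eq_sum_range (fun j => if (j+1 < n ∧ (wdL n σ).getD (j+1) 0 + r ≤ (wdL n σ).getD j 0) then (1:ℕ) else 0) n]
  apply Finset.sum_congr rfl
  intro i _
  by_cases h : (i : ℕ) + 1 < n
  · rw [dif_pos h]
    have e1 : (wdL n σ).getD ((i:ℕ)+1) 0 = (σ ⟨(i:ℕ)+1, h⟩ : ℕ) := wdL_getD n σ _ h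
    have e2 : (wdL n σ).getD (i:ℕ) 0 = (σ i : ℕ) := by
      rw [wdL_getD n σ (i:ℕ) i.isLt]
    have econd : ((σ ⟨(i:ℕ)+1, h⟩ : ℕ) + r ≤ (σ i : ℕ))
        = ((i:ℕ)+1 < n ∧ (wdL n σ).getD ((i:ℕ)+1) 0 + r ≤ (wdL n σ).getD (i:ℕ) 0) := by
      rw [e1, e2]
      simp [h]
    simp only [econd]
  · rw [dif_neg h]
    have h1 : ¬ (n + r ≤ (σ i : ℕ)) := by
      have := (σ i).isLt; omega
    have h2 : ¬ ((i:ℕ)+1 < n ∧ (wdL n σ).getD ((i:ℕ)+1) 0 + r ≤ (wdL n σ).getD (i:ℕ) 0) := by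
      rintro ⟨hh, -⟩; exact h hh
    rw [if_neg h1, if_neg h2]

lemma lastVal_eq (n : ℕ) (σ : Equiv.Perm (Fin n)) (hn : 0 < n) :
    lastVal n σ = (wdL n σ).getD (n-1) 0 + 1 := by
  rw [lastVal, dif_pos hn, wdL_getD n σ (n-1) (Nat.sub_lt hn Nat.one_pos)]

lemma Ar_eq_word (r n m k : ℕ) (hn : 1 ≤ n) :
    Ar r n m k = (((List.range n).permutations.toFinset).filter
      fun w => dsL r w = m ∧ w.getD (n-1) 0 + 1 = k).card := by
  rw [Ar]
  apply Finset.card_bij (fun σ _ => wdL n σ)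
  · intro σ hσ
    rw [Finset.mem_filter] at hσ ⊢
    obtain ⟨-, h1, h2⟩ := hσ
    refine ⟨List.mem_toFinset.mpr (List.mem_permutations.mpr (wdL_perm n σ)), ?_, ?_⟩
    · rw [← rDesc_eq]; exact h1
    · rw [← lastVal_eq n σ (by omega)]; exact h2
  · intro σ1 h1 σ2 h2 heq
    have heq' : wdL n σ1 = wdL n σ2 := heq
    have hfun := List.ofFn_injective heq'
    apply Equiv.ext
    intro i
    exact Fin.val_injective (congrFun hfun i)
  · intro w hw
    rw [Finset.mem_filter] at hw
    obtain ⟨hmem, hds, hlast⟩ := hw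
    have hperm : w.Perm (List.range n) := List.mem_permutations.mp (List.mem_toFinset.mp hmem)
    have hlen : w.length = n := by rw [hperm.length_eq, List.length_range]
    have hvals : ∀ b ∈ w, b < n := fun b hb => List.mem_range.mp (hperm.subset hb)
    have hnd : w.Nodup := (hperm.nodup_iff).mpr (List.nodup_range (n := n))
    have hbd : ∀ i : Fin n, w.getD (i : ℕ) 0 < n :=
      fun i => getD_lt_of_mem hvals (by omega)
    let f : Fin n → Fin n := fun i => ⟨w.getD i 0, hbd i⟩
    have hinj : Function.Injective f := by
      intro i j hij
      have h1 : w.getD (i:ℕ) 0 = w.getD (j:ℕ) 0 := congrArg Fin.val hij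
      rw [getD_eq_get' (by omega : (i:ℕ) < w.length), getD_eq_get' (by omega : (j:ℕ) < w.length)] at h1
      have h2 := List.nodup_iff_injective_get.mp hnd h1
      have hv : (i:ℕ) = (j:ℕ) := congrArg (fun x : Fin w.length => (x:ℕ)) h2
      exact Fin.ext hv
    have hbij := Finite.injective_iff_bijective.mp hinj
    have hwd : wdL n (Equiv.ofBijective f hbij) = w := by
      apply List.ext_getElem (by simp [wdL, hlen])
      intro i hi1 hi2
      have hi : i < n := by simpa [wdL] using hi1
      simp only [wdL, List.getElem_ofFn]
      show (f ⟨i, hi⟩ : ℕ) = w[i]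
      simp only [f]
      rw [getD_eq_get' (by omega : i < w.length)]
      simp [List.get_eq_getElem]
    refine ⟨Equiv.ofBijective f hbij, ?_, hwd⟩
    rw [Finset.mem_filter]
    refine ⟨Finset.mem_univ _, ?_, ?_⟩
    · rw [rDesc_eq, hwd]; exact hds
    · rw [lastVal_eq _ _ (by omega), hwd]; exact hlast

lemma range_succ_base (n' : ℕ) : List.range (n'+1) = 0 :: baseL 1 n' := by
  have h := List.range_succ_eq_map (n := n')
  rw [h]
  rfl

lemma baseL_zero (N : ℕ) : baseL 0 N = List.range N := by
  simp [baseL]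

lemma getD_last_of_concat (u : List ℕ) (v : ℕ) (i : ℕ) (hi : i = u.length) :
    (u ++ [v]).getD i 0 = v := by
  subst hi
  rw [List.getD_append_right u [v] 0 u.length (le_refl _)]
  simp

lemma eq_concat_of_getD {w : List ℕ} {v : ℕ} (hne : w ≠ [])
    (hlast : w.getD (w.length - 1) 0 = v) : w = w.dropLast ++ [v] := by
  have h1 : w.dropLast ++ [w.getLast hne] = w := List.dropLast_append_getLast hne
  have h2 : w.getLast hne = w.getD (w.length - 1) 0 := by
    rw [List.getLast_eq_getElem, List.getD_eq_getElem?_getD, List.getElem?_eq_getElem (by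
      have : 0 < w.length := List.length_pos_iff.mpr hne
      omega)]
    rfl
  conv_lhs => rw [← h1]
  rw [h2, hlast]

lemma word_LHS (r n' m : ℕ) :
    (((List.range (n'+1)).permutations.toFinset).filter
      fun w => dsL (r+1) w = m ∧ w.getD (n'+1-1) 0 + 1 = 1).card = HcL r 1 n' m := by
  simp only [Nat.add_sub_cancel]
  rw [HcL]
  apply Finset.card_bij (fun w _ => w.dropLast)
  · intro w hw
    rw [Finset.mem_filter] at hw ⊢
    obtain ⟨hmem, hds, hlast⟩ := hw
    have hperm : w.Perm (List.range (n'+1)) := List.mem_permutations.mp (List.mem_toFinset.mp hmem)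
    have hlen : w.length = n'+1 := by rw [hperm.length_eq, List.length_range]
    have hne : w ≠ [] := by
      intro hcon; rw [hcon] at hlen; simp at hlen
    have hw0 : w = w.dropLast ++ [0] :=
      eq_concat_of_getD hne (by rw [hlen]; simp only [Nat.add_sub_cancel]; omega)
    have hu : w.dropLast.Perm (baseL 1 n') := by
      have h1 : (0 :: w.dropLast).Perm w := by
        rw (occs := .pos [2]) [hw0]
        exact (List.perm_append_singleton 0 w.dropLast).symm
      have h2 : (0 :: w.dropLast).Perm (0 :: baseL 1 n') :=
        h1.trans (hperm.trans (by rw [range_succ_base]))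
      exact h2.cons_inv
    refine ⟨mem_gsetL.mpr hu, ?_⟩
    show dsL (r + 1) (w.dropLast ++ tlL 1) = m
    have : tlL 1 = [0] := rfl
    rw [this, ← hw0]
    exact hds
  · intro w1 h1 w2 h2 heq
    rw [Finset.mem_filter] at h1 h2
    have hp1 : w1.Perm (List.range (n'+1)) := List.mem_permutations.mp (List.mem_toFinset.mp h1.1)
    have hp2 : w2.Perm (List.range (n'+1)) := List.mem_permutations.mp (List.mem_toFinset.mp h2.1)
    have hl1 : w1.length = n'+1 := by rw [hp1.length_eq, List.length_range]
    have hl2 : w2.length = n'+1 := by rw [hp2.length_eq, List.length_range]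
    have hne1 : w1 ≠ [] := by intro hcon; rw [hcon] at hl1; simp at hl1
    have hne2 : w2 ≠ [] := by intro hcon; rw [hcon] at hl2; simp at hl2
    have hw1 : w1 = w1.dropLast ++ [0] := eq_concat_of_getD hne1 (by rw [hl1]; simp only [Nat.add_sub_cancel]; have := h1.2.2; omega)
    have hw2 : w2 = w2.dropLast ++ [0] := eq_concat_of_getD hne2 (by rw [hl2]; simp only [Nat.add_sub_cancel]; have := h2.2.2; omega)
    rw [hw1, hw2]
    rw [heq]
  · intro u hu
    rw [Finset.mem_filter] at hu
    obtain ⟨hmem, hds⟩ := hu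
    have hup : u.Perm (baseL 1 n') := mem_gsetL.mp hmem
    have hul : u.length = n' := length_of_perm_base hup
    refine ⟨u ++ [0], ?_, by rw [List.dropLast_concat]⟩
    rw [Finset.mem_filter]
    refine ⟨?_, ?_, ?_⟩
    · rw [List.mem_toFinset, List.mem_permutations]
      refine (List.perm_append_singleton 0 u).trans ?_
      rw [range_succ_base]
      exact hup.cons 0
    · have : tlL 1 = [0] := rfl
      rw [this] at hds
      exact hds
    · rw [getD_last_of_concat u 0 n' hul.symm]

lemma word_RHS (r n' m : ℕ) (hr : 1 ≤ r) :
    (((List.range (n'+1)).permutations.toFinset).filter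
      fun w => dsL r w = m ∧ w.getD (n'+1-1) 0 + 1 = n'+1).card = HcL r 0 n' m := by
  simp only [Nat.add_sub_cancel]
  rw [HcL]
  apply Finset.card_bij (fun w _ => w.dropLast)
  · intro w hw
    rw [Finset.mem_filter] at hw ⊢
    obtain ⟨hmem, hds, hlast⟩ := hw
    have hperm : w.Perm (List.range (n'+1)) := List.mem_permutations.mp (List.mem_toFinset.mp hmem)
    have hlen : w.length = n'+1 := by rw [hperm.length_eq, List.length_range]
    have hne : w ≠ [] := by
      intro hcon; rw [hcon] at hlen; simp at hlen
    have hw0 : w = w.dropLast ++ [n'] :=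
      eq_concat_of_getD hne (by rw [hlen]; simp only [Nat.add_sub_cancel]; omega)
    have hu : w.dropLast.Perm (baseL 0 n') := by
      have h1 : (n' :: w.dropLast).Perm w := by
        rw (occs := .pos [2]) [hw0]
        exact (List.perm_append_singleton n' w.dropLast).symm
      have h2 : (n' :: w.dropLast).Perm (n' :: baseL 0 n') := by
        refine h1.trans (hperm.trans ?_)
        rw [baseL_zero, List.range_succ]
        exact List.perm_append_singleton n' (List.range n')
      exact h2.cons_inv
    refine ⟨mem_gsetL.mpr hu, ?_⟩
    show dsL (r + 0) (w.dropLast ++ tlL 0) = m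
    have ht : tlL 0 = [] := rfl
    rw [ht, List.append_nil, Nat.add_zero]
    have hvals : ∀ b ∈ w.dropLast, b < n' + r := by
      intro b hb
      have := (mem_baseL.mp (hu.subset hb)).2
      omega
    rw [← dsL_concat r n' w.dropLast hvals, ← hw0]
    exact hds
  · intro w1 h1 w2 h2 heq
    rw [Finset.mem_filter] at h1 h2
    have hp1 : w1.Perm (List.range (n'+1)) := List.mem_permutations.mp (List.mem_toFinset.mp h1.1)
    have hp2 : w2.Perm (List.range (n'+1)) := List.mem_permutations.mp (List.mem_toFinset.mp h2.1)
    have hl1 : w1.length = n'+1 := by rw [hp1.length_eq, List.length_range]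
    have hl2 : w2.length = n'+1 := by rw [hp2.length_eq, List.length_range]
    have hne1 : w1 ≠ [] := by intro hcon; rw [hcon] at hl1; simp at hl1
    have hne2 : w2 ≠ [] := by intro hcon; rw [hcon] at hl2; simp at hl2
    have hw1 : w1 = w1.dropLast ++ [n'] := eq_concat_of_getD hne1 (by rw [hl1]; simp only [Nat.add_sub_cancel]; have := h1.2.2; omega)
    have hw2 : w2 = w2.dropLast ++ [n'] := eq_concat_of_getD hne2 (by rw [hl2]; simp only [Nat.add_sub_cancel]; have := h2.2.2; omega)
    rw [hw1, hw2]
    rw [heq]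
  · intro u hu
    rw [Finset.mem_filter] at hu
    obtain ⟨hmem, hds⟩ := hu
    have hup : u.Perm (baseL 0 n') := mem_gsetL.mp hmem
    have hul : u.length = n' := length_of_perm_base hup
    refine ⟨u ++ [n'], ?_, by rw [List.dropLast_concat]⟩
    rw [Finset.mem_filter]
    refine ⟨?_, ?_, ?_⟩
    · rw [List.mem_toFinset, List.mem_permutations]
      refine (List.perm_append_singleton n' u).trans ?_
      rw [List.range_succ]
      refine ((hup.cons n').trans ?_)
      rw [baseL_zero]
      exact (List.perm_append_singleton n' (List.range n')).symm
    · have ht : tlL 0 = [] := rfl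
      rw [ht, List.append_nil, Nat.add_zero] at hds
      have hvals : ∀ b ∈ u, b < n' + r := by
        intro b hb
        have := (mem_baseL.mp (hup.subset hb)).2
        omega
      rw [dsL_concat r n' u hvals]
      exact hds
    · rw [getD_last_of_concat u n' n' hul.symm]

/-- `A_{r+1}(n,m,1) = A_r(n,m,n)` for positive `n, m, r`. -/
theorem stmt4 (n m r : ℕ) (hn : 1 ≤ n) (hm : 1 ≤ m) (hr : 1 ≤ r) :
    Ar (r + 1) n m 1 = Ar r n m n := by
  obtain ⟨n', rfl⟩ : ∃ n', n = n' + 1 := ⟨n - 1, by omega⟩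
  rw [Ar_eq_word (r+1) (n'+1) m 1 (by omega), Ar_eq_word r (n'+1) m (n'+1) (by omega)]
  rw [word_LHS r n' m, word_RHS r n' m hr, HcL_eq r hr n' m]
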